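/- Let T = [[1,0],[1,1]] ∈ SL₂(ℝ) (a positive unipotent element). The closure in SL₂(ℝ) of the conjugacy class {g T g⁻¹ : g ∈ SL₂(ℝ)} equals the conjugacy class together with the identity matrix: cl({g T g⁻¹ : g ∈ SL₂(ℝ)}) = {g T g⁻¹ : g ∈ SL₂(ℝ)} ∪ {I}. -/

import Mathlib

open Matrix
open scoped MatrixGroups

/-- The topology on `SL₂(ℝ)` induced from the space of 2×2 real matrices. -/
noncomputable instance : TopologicalSpace (SL(2, ℝ)) :=
  TopologicalSpace.induced (fun g => (g : Matrix (Fin 2) (Fin 2) ℝ)) inferInstance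

/-- The positive unipotent matrix `T = [[1,0],[1,1]]` as an element of `SL₂(ℝ)`. -/
noncomputable def posUnipotent : SL(2, ℝ) :=
  ⟨!![1, 0; 1, 1], by norm_num [Matrix.det_fin_two_of]⟩

lemma conj_entries (g : SL(2,ℝ)) :
    ((g * posUnipotent * g⁻¹ : SL(2,ℝ)) : Matrix (Fin 2) (Fin 2) ℝ)
      = !![1 + g 0 1 * g 1 1, -(g 0 1)^2; (g 1 1)^2, 1 - g 0 1 * g 1 1] := by
  have hdet : g 0 0 * g 1 1 - g 0 1 * g 1 0 = 1 := by
    have := g.2; rwa [Matrix.det_fin_two] at this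
  have hT : ((posUnipotent : SL(2,ℝ)) : Matrix (Fin 2) (Fin 2) ℝ) = !![1, 0; 1, 1] := rfl
  ext i j
  fin_cases i <;> fin_cases j <;>
    simp [Matrix.SpecialLinearGroup.coe_inv, Matrix.mul_apply, Fin.sum_univ_two,
      Matrix.adjugate_fin_two, hT] <;> ring_nf <;> linear_combination hdet

lemma entry_continuous (i j : Fin 2) :
    Continuous fun g : SL(2,ℝ) => (g : Matrix (Fin 2) (Fin 2) ℝ) i j := by
  have h1 : Continuous fun g : SL(2,ℝ) => (g : Matrix (Fin 2) (Fin 2) ℝ) := continuous_induced_dom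
  exact ((continuous_apply j).comp (continuous_apply i)).comp h1

lemma S_closed : IsClosed {B : SL(2,ℝ) |
    ((B : Matrix (Fin 2) (Fin 2) ℝ) 0 0 + (B : Matrix (Fin 2) (Fin 2) ℝ) 1 1 = 2 ∧
    0 ≤ (B : Matrix (Fin 2) (Fin 2) ℝ) 1 0) ∧ (B : Matrix (Fin 2) (Fin 2) ℝ) 0 1 ≤ 0} :=
  (((isClosed_eq ((entry_continuous 0 0).add (entry_continuous 1 1)) continuous_const).inter
    (isClosed_le continuous_const (entry_continuous 1 0))).inter
    (isClosed_le (entry_continuous 0 1) continuous_const))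

lemma coe_one : ((1 : SL(2,ℝ)) : Matrix (Fin 2) (Fin 2) ℝ) = !![1,0;0,1] := by
  ext i j; fin_cases i <;> fin_cases j <;> simp [Matrix.one_apply]

lemma one_mem_closure :
    (1 : SL(2,ℝ)) ∈ closure {B : SL(2, ℝ) | ∃ g : SL(2, ℝ), g * posUnipotent * g⁻¹ = B} := by
  have hd : ∀ n : ℕ, Real.sqrt (1/(n+1)) ≠ 0 := by
    intro n
    have : (0:ℝ) < 1/(n+1) := by positivity
    positivity
  set u : ℕ → SL(2,ℝ) := fun n =>
    (⟨!![(Real.sqrt (1/(n+1)))⁻¹, 0; 0, Real.sqrt (1/(n+1))], by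
        have h : Real.sqrt ((n:ℝ)+1) ≠ 0 := by positivity
        simp [Matrix.det_fin_two_of, inv_mul_cancel₀ (hd n), mul_inv_cancel₀ h]⟩ : SL(2,ℝ)) with hu
  refine mem_closure_of_tendsto (b := Filter.atTop)
    (f := fun n : ℕ => u n * posUnipotent * (u n)⁻¹) ?_
    (Filter.Eventually.of_forall fun n => ⟨u n, rfl⟩)
  rw [nhds_induced, Filter.tendsto_comap_iff]
  have hcont : Continuous fun t : ℝ => !![(1:ℝ),0;t,1] := by
    apply continuous_matrix
    intro i j
    fin_cases i <;> fin_cases j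
    · simpa using continuous_const
    · simpa using continuous_const
    · simpa using continuous_id'
    · simpa using continuous_const
  have hlim : Filter.Tendsto (fun n : ℕ => (1:ℝ)/(n+1)) Filter.atTop (nhds 0) :=
    tendsto_one_div_add_atTop_nhds_zero_nat
  have := (hcont.tendsto 0).comp hlim
  have heq : ∀ n : ℕ, ((fun t : ℝ => !![(1:ℝ),0;t,1]) ∘ fun n : ℕ => (1:ℝ)/(n+1)) n
      = ((u n * posUnipotent * (u n)⁻¹ : SL(2,ℝ)) : Matrix (Fin 2) (Fin 2) ℝ) := by
    intro n
    rw [conj_entries]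
    have h1 : (0:ℝ) ≤ 1/(n+1) := by positivity
    have h2 : (0:ℝ) ≤ (n:ℝ)+1 := by positivity
    simp [hu, Real.sq_sqrt h1, Real.sq_sqrt h2]
  have goal2 : Filter.Tendsto
      (fun n => ((u n * posUnipotent * (u n)⁻¹ : SL(2,ℝ)) : Matrix (Fin 2) (Fin 2) ℝ))
      Filter.atTop (nhds !![1,0;0,1]) := Filter.Tendsto.congr heq (by simpa using this)
  show Filter.Tendsto
      (fun n => ((u n * posUnipotent * (u n)⁻¹ : SL(2,ℝ)) : Matrix (Fin 2) (Fin 2) ℝ))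
      Filter.atTop (nhds ((1 : SL(2,ℝ)) : Matrix (Fin 2) (Fin 2) ℝ))
  rw [coe_one]
  exact goal2

/-- The closure in `SL₂(ℝ)` of the conjugacy class of the positive unipotent
`T = [[1,0],[1,1]]` is the conjugacy class together with the identity. -/
theorem closure_posUnipotent_conjugacy_class :
    closure {B : SL(2, ℝ) | ∃ g : SL(2, ℝ), g * posUnipotent * g⁻¹ = B}
      = {B : SL(2, ℝ) | ∃ g : SL(2, ℝ), g * posUnipotent * g⁻¹ = B} ∪ {1} := by
  set c := {B : SL(2, ℝ) | ∃ g : SL(2, ℝ), g * posUnipotent * g⁻¹ = B} with hc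
  set S := {B : SL(2,ℝ) |
    ((B : Matrix (Fin 2) (Fin 2) ℝ) 0 0 + (B : Matrix (Fin 2) (Fin 2) ℝ) 1 1 = 2 ∧
    0 ≤ (B : Matrix (Fin 2) (Fin 2) ℝ) 1 0) ∧ (B : Matrix (Fin 2) (Fin 2) ℝ) 0 1 ≤ 0} with hS
  apply subset_antisymm
  · -- closure c ⊆ S ⊆ c ∪ {1}
    have hcS : c ⊆ S := by
      rintro B ⟨g, rfl⟩
      have h := conj_entries g
      constructor
      · constructor
        · rw [h]; simp; ring
        · rw [h]; simp; positivity
      · rw [h]; simp; positivity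
    have hSc : S ⊆ c ∪ {1} := by
      rintro B ⟨⟨htr, hcpos⟩, hbneg⟩
      have hdet : (B : Matrix (Fin 2) (Fin 2) ℝ) 0 0 * (B : Matrix (Fin 2) (Fin 2) ℝ) 1 1
          - (B : Matrix (Fin 2) (Fin 2) ℝ) 0 1 * (B : Matrix (Fin 2) (Fin 2) ℝ) 1 0 = 1 := by
        have := B.2; rwa [Matrix.det_fin_two] at this
      set a := (B : Matrix (Fin 2) (Fin 2) ℝ) 0 0 with ha
      set b := (B : Matrix (Fin 2) (Fin 2) ℝ) 0 1 with hb
      set cc := (B : Matrix (Fin 2) (Fin 2) ℝ) 1 0 with hcc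
      set d := (B : Matrix (Fin 2) (Fin 2) ℝ) 1 1 with hdd
      rcases lt_or_eq_of_le hcpos with hcpos | hczero
      · -- cc > 0
        left
        have hs : Real.sqrt cc ≠ 0 := by positivity
        have hsq : Real.sqrt cc ^ 2 = cc := Real.sq_sqrt hcpos.le
        refine ⟨⟨!![(Real.sqrt cc)⁻¹, (a-1)/Real.sqrt cc; 0, Real.sqrt cc], by
          simp [Matrix.det_fin_two_of, inv_mul_cancel₀ hs]⟩, ?_⟩
        apply Subtype.ext
        refine (conj_entries _).trans ?_
        ext i j
        fin_cases i <;> fin_cases j <;> simp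
        · field_simp; linarith [ha]
        · -- -( (a-1)/√cc )^2 = b
          have key : -(a-1)^2 = b * cc := by linear_combination hdet - a * htr
          field_simp
          nlinarith [hsq, key]
        · exact hsq
        · field_simp
          nlinarith [htr]
      · -- cc = 0
        have hd1 : a * d = 1 := by rw [← hdet, ← hczero]; ring
        have ha1 : a = 1 := by nlinarith [htr, hd1]
        have hd2 : d = 1 := by linarith [htr]
        rcases lt_or_eq_of_le hbneg with hbneg | hbzero
        · left
          have hs : Real.sqrt (-b) ≠ 0 := by
            have : (0:ℝ) < -b := by linarith
            positivity
          have hsq : Real.sqrt (-b) ^ 2 = -b := Real.sq_sqrt (by linarith)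
          refine ⟨⟨!![0, Real.sqrt (-b); -(Real.sqrt (-b))⁻¹, 0], by
            simp [Matrix.det_fin_two_of, mul_inv_cancel₀ hs]⟩, ?_⟩
          apply Subtype.ext
          refine (conj_entries _).trans ?_
          ext i j
          fin_cases i <;> fin_cases j <;> simp
          · exact ha1.symm
          · rw [← hb]; nlinarith [hsq]
          · exact hczero
          · exact hd2.symm
        · right
          apply Subtype.ext
          rw [coe_one]
          ext i j
          fin_cases i <;> fin_cases j <;> simp
          · exact ha1
          · rw [← hb]; exact hbzero
          · exact hczero.symm
          · exact hd2
    exact (closure_minimal hcS S_closed).trans hSc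
  · rw [Set.union_subset_iff]
    exact ⟨subset_closure, by simpa using one_mem_closure⟩
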